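/- In the heteroscedastic model, for Y_i = X_i − X̄: E(Y_i Y_{i'}) = ∑_{u≠∅} ( 1{i_u=i'_u} σ²_{i,u} − ν_{i,u}σ²_{i,u} − ν_{i',u}σ²_{i',u} + \overline{ν_u σ²_u} ), where \overline{ν_u σ²_u} = (1/N)∑_i Z_i ν_{i,u} σ²_{i,u}. -/

import Mathlib

open scoped BigOperators

private lemma Elsum {Ω α : Type*} (E : (Ω → ℝ) →ₗ[ℝ] ℝ) (s : Finset α) (F : α → Ω → ℝ) :
    E (fun ω => ∑ k ∈ s, F k ω) = ∑ k ∈ s, E (F k) := by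
  have h : (fun ω => ∑ k ∈ s, F k ω) = ∑ k ∈ s, F k := by
    funext ω; simp
  rw [h, map_sum]

private lemma Elsmul {Ω : Type*} (E : (Ω → ℝ) →ₗ[ℝ] ℝ) (a : ℝ) (F : Ω → ℝ) :
    E (fun ω => a * F ω) = a * E F := by
  have h : (fun ω => a * F ω) = a • F := rfl
  rw [h, map_smul, smul_eq_mul]

private lemma Elcomb {Ω : Type*} (E : (Ω → ℝ) →ₗ[ℝ] ℝ) (f1 f2 f3 f4 : Ω → ℝ) :
    E (fun ω => f1 ω - f2 ω - f3 ω + f4 ω) = E f1 - E f2 - E f3 + E f4 := by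
  have h : (fun ω => f1 ω - f2 ω - f3 ω + f4 ω) = f1 - f2 - f3 + f4 := rfl
  rw [h, map_add, map_sub, map_sub]

/-- Lemma 2 (heteroscedastic model): with `Y_i = X_i − X̄`,
`E(Y_i Y_{i'}) = ∑_{u≠∅} (1{i_u=i'_u} σ²_{i,u} − ν_{i,u}σ²_{i,u} − ν_{i',u}σ²_{i',u}
 + \overline{ν_u σ²_u})`. -/
theorem stmt17 {r : ℕ} (hr : 1 ≤ r) {Ω : Type*}
    (E : (Ω → ℝ) →ₗ[ℝ] ℝ) (hE1 : E (fun _ => 1) = 1)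
    (Z : (Fin r → ℕ) → ℝ)
    (hZ01 : ∀ i, Z i = 0 ∨ Z i = 1)
    (hZfin : (Function.support Z).Finite)
    (N : ℝ) (hN : N = ∑ᶠ i, Z i) (hNpos : 0 < N)
    (μ : ℝ) (σ2 : (Fin r → ℕ) → Finset (Fin r) → ℝ)
    (ε : (Fin r → ℕ) → Finset (Fin r) → Ω → ℝ)
    (hdep : ∀ i i' u, (∀ j ∈ u, i j = i' j) → ε i u = ε i' u)
    (hσdep : ∀ i i' u, (∀ j ∈ u, i j = i' j) → σ2 i u = σ2 i' u)
    (hmean : ∀ i u, u.Nonempty → E (ε i u) = 0)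
    (hcov : ∀ i i' u u', u.Nonempty → u'.Nonempty →
      E (fun ω => ε i u ω * ε i' u' ω)
        = σ2 i u * (if u = u' ∧ ∀ j ∈ u, i j = i' j then (1 : ℝ) else 0))
    (X : (Fin r → ℕ) → Ω → ℝ)
    (hX : ∀ i ω, X i ω = μ + ∑ u ∈ Finset.univ.erase (∅ : Finset (Fin r)), ε i u ω)
    (Nmatch : (Fin r → ℕ) → Finset (Fin r) → ℝ)
    (hNmatch : ∀ i u, Nmatch i u
      = ∑ᶠ i', Z i' * (if ∀ j ∈ u, i j = i' j then (1 : ℝ) else 0))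
    (νi : (Fin r → ℕ) → Finset (Fin r) → ℝ)
    (hνi : ∀ i u, νi i u = Nmatch i u / N)
    (νσbar : Finset (Fin r) → ℝ)
    (hνσbar : ∀ u, νσbar u = (1 / N) * ∑ᶠ i, Z i * (νi i u * σ2 i u))
    (Xbar : Ω → ℝ)
    (hXbar : ∀ ω, Xbar ω = (1 / N) * ∑ᶠ i, Z i * X i ω)
    (i i' : Fin r → ℕ) :
    E (fun ω => (X i ω - Xbar ω) * (X i' ω - Xbar ω))
      = ∑ u ∈ Finset.univ.erase (∅ : Finset (Fin r)),
          ((if ∀ j ∈ u, i j = i' j then (1 : ℝ) else 0) * σ2 i u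
            - νi i u * σ2 i u - νi i' u * σ2 i' u + νσbar u) := by
  classical
  set s : Finset (Fin r → ℕ) := hZfin.toFinset with hs
  set T : Finset (Finset (Fin r)) := Finset.univ.erase (∅ : Finset (Fin r)) with hT
  have hNne : N ≠ 0 := ne_of_gt hNpos
  have hsub : ∀ (g : (Fin r → ℕ) → ℝ), (∀ k, Z k = 0 → g k = 0) →
      ∑ᶠ k, g k = ∑ k ∈ s, g k := by
    intro g hg
    refine finsum_eq_sum_of_support_subset g ?_
    intro k hk
    have hZk : Z k ≠ 0 := by
      intro h0
      exact hk (hg k h0)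
    simp [hs, hZk]
  have hNs : N = ∑ k ∈ s, Z k := by
    rw [hN]
    exact hsub Z (fun k h => h)
  have hNmatch' : ∀ a u, Nmatch a u
      = ∑ k ∈ s, Z k * (if ∀ j ∈ u, a j = k j then (1:ℝ) else 0) := by
    intro a u
    rw [hNmatch]
    exact hsub _ (fun k h => by rw [h, zero_mul])
  have hνσbar' : ∀ u, νσbar u = (1/N) * ∑ k ∈ s, Z k * (νi k u * σ2 k u) := by
    intro u
    rw [hνσbar]
    congr 1
    exact hsub _ (fun k h => by rw [h, zero_mul])
  have hXbar' : ∀ ω, Xbar ω = (1/N) * ∑ k ∈ s, Z k * X k ω := by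
    intro ω
    rw [hXbar]
    congr 1
    exact hsub _ (fun k h => by rw [h, zero_mul])
  set δ : (Fin r → ℕ) → Finset (Fin r) → Ω → ℝ :=
    fun a u ω => ε a u ω - (1/N) * ∑ k ∈ s, Z k * ε k u ω with hδ
  -- pointwise decomposition of the centered variable
  have hY : ∀ a ω, X a ω - Xbar ω = ∑ u ∈ T, δ a u ω := by
    intro a ω
    have h1 : Xbar ω = μ + (1/N) * ∑ k ∈ s, (Z k * ∑ u ∈ T, ε k u ω) := by
      rw [hXbar' ω]
      have h2 : ∀ k ∈ s, Z k * X k ω = Z k * μ + Z k * ∑ u ∈ T, ε k u ω := by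
        intro k _
        rw [hX k ω]
        ring
      rw [Finset.sum_congr rfl h2, Finset.sum_add_distrib, ← Finset.sum_mul, ← hNs]
      field_simp
    have h2 : ∑ u ∈ T, δ a u ω
        = (∑ u ∈ T, ε a u ω) - (1/N) * ∑ k ∈ s, (Z k * ∑ u ∈ T, ε k u ω) := by
      simp only [hδ]
      rw [Finset.sum_sub_distrib]
      congr 1
      rw [← Finset.mul_sum, Finset.sum_comm]
      congr 1
      exact Finset.sum_congr rfl fun k _ => (Finset.mul_sum _ _ _).symm
    rw [hX a ω, h1, h2]
    ring
  -- key covariance computation per pair (u, u')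
  have key : ∀ u ∈ T, ∀ u' ∈ T,
      E (fun ω => δ i u ω * δ i' u' ω)
        = if u = u' then ((if ∀ j ∈ u, i j = i' j then (1:ℝ) else 0) * σ2 i u
            - νi i u * σ2 i u - νi i' u * σ2 i' u + νσbar u) else 0 := by
    intro u hu u' hu'
    have hune : u.Nonempty :=
      Finset.nonempty_iff_ne_empty.mpr (Finset.ne_of_mem_erase hu)
    have hu'ne : u'.Nonempty :=
      Finset.nonempty_iff_ne_empty.mpr (Finset.ne_of_mem_erase hu')
    have hexp : (fun ω => δ i u ω * δ i' u' ω)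
        = fun ω => ε i u ω * ε i' u' ω
            - (1/N) * ∑ k ∈ s, Z k * (ε i u ω * ε k u' ω)
            - (1/N) * ∑ k ∈ s, Z k * (ε k u ω * ε i' u' ω)
            + (1/N) * ∑ k ∈ s, Z k * ((1/N) * ∑ k' ∈ s, Z k' * (ε k u ω * ε k' u' ω)) := by
      funext ω
      simp only [hδ]
      have e1 : ∑ k ∈ s, Z k * (ε i u ω * ε k u' ω)
          = ε i u ω * ∑ k ∈ s, Z k * ε k u' ω := by
        rw [Finset.mul_sum]
        exact Finset.sum_congr rfl fun k _ => by ring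
      have e2 : ∑ k ∈ s, Z k * (ε k u ω * ε i' u' ω)
          = (∑ k ∈ s, Z k * ε k u ω) * ε i' u' ω := by
        rw [Finset.sum_mul]
        exact Finset.sum_congr rfl fun k _ => by ring
      have e3 : ∑ k ∈ s, Z k * ((1/N) * ∑ k' ∈ s, Z k' * (ε k u ω * ε k' u' ω))
          = (1/N) * ((∑ k ∈ s, Z k * ε k u ω) * (∑ k' ∈ s, Z k' * ε k' u' ω)) := by
        have e3' : ∀ k, ∑ k' ∈ s, Z k' * (ε k u ω * ε k' u' ω)
            = ε k u ω * ∑ k' ∈ s, Z k' * ε k' u' ω := by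
          intro k
          rw [Finset.mul_sum]
          exact Finset.sum_congr rfl fun k' _ => by ring
        simp only [e3']
        conv_rhs => rw [Finset.sum_mul, Finset.mul_sum]
        exact Finset.sum_congr rfl fun k _ => by ring
      rw [e1, e2, e3]
      ring
    rw [hexp]
    rw [Elcomb E (fun ω => ε i u ω * ε i' u' ω)
      (fun ω => (1/N) * ∑ k ∈ s, Z k * (ε i u ω * ε k u' ω))
      (fun ω => (1/N) * ∑ k ∈ s, Z k * (ε k u ω * ε i' u' ω))
      (fun ω => (1/N) * ∑ k ∈ s, Z k * ((1/N) * ∑ k' ∈ s, Z k' * (ε k u ω * ε k' u' ω)))]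
    have hEA : E (fun ω => ε i u ω * ε i' u' ω)
        = σ2 i u * (if u = u' ∧ ∀ j ∈ u, i j = i' j then (1:ℝ) else 0) :=
      hcov i i' u u' hune hu'ne
    have hB : E (fun ω => (1/N) * ∑ k ∈ s, Z k * (ε i u ω * ε k u' ω))
        = (1/N) * ∑ k ∈ s, Z k * (σ2 i u * (if u = u' ∧ ∀ j ∈ u, i j = k j then (1:ℝ) else 0)) := by
      rw [Elsmul E (1/N) (fun ω => ∑ k ∈ s, Z k * (ε i u ω * ε k u' ω)),
        Elsum E s (fun k ω => Z k * (ε i u ω * ε k u' ω))]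
      congr 1
      refine Finset.sum_congr rfl fun k _ => ?_
      rw [Elsmul E (Z k) (fun ω => ε i u ω * ε k u' ω), hcov i k u u' hune hu'ne]
    have hC : E (fun ω => (1/N) * ∑ k ∈ s, Z k * (ε k u ω * ε i' u' ω))
        = (1/N) * ∑ k ∈ s, Z k * (σ2 k u * (if u = u' ∧ ∀ j ∈ u, k j = i' j then (1:ℝ) else 0)) := by
      rw [Elsmul E (1/N) (fun ω => ∑ k ∈ s, Z k * (ε k u ω * ε i' u' ω)),
        Elsum E s (fun k ω => Z k * (ε k u ω * ε i' u' ω))]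
      congr 1
      refine Finset.sum_congr rfl fun k _ => ?_
      rw [Elsmul E (Z k) (fun ω => ε k u ω * ε i' u' ω), hcov k i' u u' hune hu'ne]
    have hD : E (fun ω => (1/N) * ∑ k ∈ s, Z k * ((1/N) * ∑ k' ∈ s, Z k' * (ε k u ω * ε k' u' ω)))
        = (1/N) * ∑ k ∈ s, Z k * ((1/N) * ∑ k' ∈ s,
            Z k' * (σ2 k u * (if u = u' ∧ ∀ j ∈ u, k j = k' j then (1:ℝ) else 0))) := by
      rw [Elsmul E (1/N) (fun ω => ∑ k ∈ s, Z k * ((1/N) * ∑ k' ∈ s, Z k' * (ε k u ω * ε k' u' ω))),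
        Elsum E s (fun k ω => Z k * ((1/N) * ∑ k' ∈ s, Z k' * (ε k u ω * ε k' u' ω)))]
      congr 1
      refine Finset.sum_congr rfl fun k _ => ?_
      rw [Elsmul E (Z k) (fun ω => (1/N) * ∑ k' ∈ s, Z k' * (ε k u ω * ε k' u' ω)),
        Elsmul E (1/N) (fun ω => ∑ k' ∈ s, Z k' * (ε k u ω * ε k' u' ω)),
        Elsum E s (fun k' ω => Z k' * (ε k u ω * ε k' u' ω))]
      congr 2
      refine Finset.sum_congr rfl fun k' _ => ?_
      rw [Elsmul E (Z k') (fun ω => ε k u ω * ε k' u' ω), hcov k k' u u' hune hu'ne]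
    rw [hEA, hB, hC, hD]
    by_cases huu : u = u'
    · subst huu
      simp only [eq_self_iff_true, true_and, if_true]
      have f3 : ∑ k ∈ s, Z k * (σ2 k u * (if ∀ j ∈ u, k j = i' j then (1:ℝ) else 0))
          = σ2 i' u * Nmatch i' u := by
        rw [hNmatch' i' u, Finset.mul_sum]
        refine Finset.sum_congr rfl fun k _ => ?_
        by_cases h : ∀ j ∈ u, k j = i' j
        · rw [if_pos h, if_pos (fun j hj => (h j hj).symm), hσdep k i' u h]
          ring
        · rw [if_neg h, if_neg (fun h' => h (fun j hj => (h' j hj).symm))]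
          ring
      have f4 : ∀ k, ∑ k' ∈ s, Z k' * (σ2 k u * (if ∀ j ∈ u, k j = k' j then (1:ℝ) else 0))
          = σ2 k u * Nmatch k u := by
        intro k
        rw [hNmatch' k u, Finset.mul_sum]
        exact Finset.sum_congr rfl fun k' _ => by ring
      simp only [f4]
      rw [f3]
      have f4' : ∑ k ∈ s, Z k * ((1/N) * (σ2 k u * Nmatch k u))
          = ∑ k ∈ s, Z k * (νi k u * σ2 k u) := by
        refine Finset.sum_congr rfl fun k _ => ?_
        rw [hνi k u]
        ring
      rw [f4', ← hνσbar' u, hνi i u, hνi i' u]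
      ring
    · simp [huu]
  -- assemble
  have hfun : (fun ω => (X i ω - Xbar ω) * (X i' ω - Xbar ω))
      = fun ω => ∑ u ∈ T, ∑ u' ∈ T, δ i u ω * δ i' u' ω := by
    funext ω
    rw [hY i ω, hY i' ω, Finset.sum_mul_sum]
  rw [hfun, Elsum E T (fun u ω => ∑ u' ∈ T, δ i u ω * δ i' u' ω)]
  refine Finset.sum_congr rfl fun u hu => ?_
  rw [Elsum E T (fun u' ω => δ i u ω * δ i' u' ω),
    Finset.sum_congr rfl (fun u' hu' => key u hu u' hu'),
    Finset.sum_ite_eq T u]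
  exact if_pos hu
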